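/- Let d ∈ ℕ with d ≥ 1, α ∈ (d/2, ∞), β ∈ ℝ and c ∈ (0,∞). Then sup_{v ∈ ℤ^d} [ (λ_v)^β · Σ_{k ∈ ℤ^d, ‖k‖ > c‖v‖} 1/(λ_k)^α ] < ∞ if and only if β ≤ α − d/2. -/

import Mathlib

open scoped ENNReal

/-- `λ_x = 1 + x₁² + ⋯ + x_d²` for a lattice point `x ∈ ℤ^d`. -/
noncomputable def lam {d : ℕ} (x : Fin d → ℤ) : ℝ := 1 + ∑ i, ((x i : ℝ)) ^ 2

/-- The Euclidean norm of a lattice point `x ∈ ℤ^d`. -/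
noncomputable def znorm {d : ℕ} (x : Fin d → ℤ) : ℝ := Real.sqrt (∑ i, ((x i : ℝ)) ^ 2)


open Real Finset
open scoped NNReal

set_option maxHeartbeats 1000000

def kinf {d : ℕ} (k : Fin d → ℤ) : ℕ := Finset.univ.sup fun i => (k i).natAbs

section basic
variable {d : ℕ} (hd : 1 ≤ d)

lemma sumsq_nonneg (k : Fin d → ℤ) : (0:ℝ) ≤ ∑ i, ((k i : ℝ)) ^ 2 :=
  Finset.sum_nonneg fun i _ => sq_nonneg _

lemma one_le_lam (k : Fin d → ℤ) : 1 ≤ lam k := by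
  have := sumsq_nonneg k; unfold lam; linarith

lemma lam_pos (k : Fin d → ℤ) : 0 < lam k := lt_of_lt_of_le one_pos (one_le_lam k)

lemma natAbs_le_kinf (k : Fin d → ℤ) (i : Fin d) : (k i).natAbs ≤ kinf k :=
  Finset.le_sup (f := fun i => (k i).natAbs) (Finset.mem_univ i)

lemma sq_cast_natAbs (m : ℤ) : ((m.natAbs : ℝ))^2 = ((m:ℝ))^2 := by
  have h : ((m.natAbs : ℤ) : ℝ) = (m.natAbs : ℝ) := Int.cast_natCast m.natAbs
  rw [← h, ← Int.cast_pow, ← Int.cast_pow, Int.natAbs_sq]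

include hd in
lemma lam_ge_kinf (k : Fin d → ℤ) : 1 + ((kinf k : ℝ))^2 ≤ lam k := by
  have hne : (Finset.univ : Finset (Fin d)).Nonempty := by
    rw [Finset.univ_nonempty_iff]
    exact Fin.pos_iff_nonempty.mp hd
  obtain ⟨i, _, hi⟩ := Finset.exists_mem_eq_sup Finset.univ hne fun i => (k i).natAbs
  have h1 : ((kinf k : ℝ))^2 = ((k i : ℝ))^2 := by
    rw [kinf, hi, sq_cast_natAbs]
  rw [lam, h1]
  have : ((k i:ℝ))^2 ≤ ∑ j, ((k j : ℝ))^2 :=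
    Finset.single_le_sum (f := fun j => ((k j:ℝ))^2) (fun j _ => sq_nonneg _) (Finset.mem_univ i)
  linarith

lemma lam_le_kinf (k : Fin d → ℤ) : lam k ≤ 1 + d * ((kinf k : ℝ))^2 := by
  rw [lam]
  have h : ∀ i ∈ Finset.univ, ((k i : ℝ))^2 ≤ ((kinf k : ℝ))^2 := by
    intro i _
    rw [← sq_cast_natAbs]
    have := natAbs_le_kinf k i
    have : ((k i).natAbs : ℝ) ≤ (kinf k : ℝ) := by exact_mod_cast this
    exact pow_le_pow_left₀ (by positivity) this 2
  have := Finset.sum_le_sum h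
  rw [Finset.sum_const, Finset.card_univ, Fintype.card_fin, nsmul_eq_mul] at this
  linarith

lemma znorm_le_sqrtd_kinf (k : Fin d → ℤ) : znorm k ≤ Real.sqrt d * kinf k := by
  rw [znorm, show Real.sqrt d * kinf k = Real.sqrt (d * (kinf k:ℝ)^2) by
    rw [Real.sqrt_mul (by positivity), Real.sqrt_sq (by positivity)]]
  apply Real.sqrt_le_sqrt
  have h := lam_le_kinf (k := k)
  rw [lam] at h; linarith

lemma znorm_sq (k : Fin d → ℤ) : (znorm k)^2 = ∑ i, ((k i : ℝ))^2 :=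
  Real.sq_sqrt (sumsq_nonneg k)

lemma znorm_nonneg (k : Fin d → ℤ) : 0 ≤ znorm k := Real.sqrt_nonneg _

lemma abs_coord_le_znorm (k : Fin d → ℤ) (i : Fin d) : |(k i : ℝ)| ≤ znorm k := by
  rw [znorm, show |(k i:ℝ)| = Real.sqrt (((k i:ℝ))^2) by rw [Real.sqrt_sq_eq_abs]]
  apply Real.sqrt_le_sqrt
  exact Finset.single_le_sum (fun j _ => sq_nonneg ((k j : ℝ))) (Finset.mem_univ i)

/-- faces of the cube -/
noncomputable def Face (d : ℕ) (i : Fin d) (n : ℕ) : Finset (Fin d → ℤ) :=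
  Fintype.piFinset (fun j => if j = i then ({-(n:ℤ), (n:ℤ)} : Finset ℤ) else Finset.Icc (-(n:ℤ)) n)

lemma card_face (i : Fin d) (n : ℕ) : (Face d i n).card ≤ 2 * (2*n+1)^(d-1) := by
  rw [Face, Fintype.card_piFinset]
  rw [← Finset.mul_prod_erase Finset.univ _ (Finset.mem_univ i)]
  have h1 : (if i = i then ({-(n:ℤ), (n:ℤ)} : Finset ℤ) else Finset.Icc (-(n:ℤ)) n).card ≤ 2 := by
    rw [if_pos rfl]
    exact (Finset.card_insert_le _ _).trans (by simp)
  have h2 : ∏ j ∈ Finset.univ.erase i,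
      (if j = i then ({-(n:ℤ), (n:ℤ)} : Finset ℤ) else Finset.Icc (-(n:ℤ)) n).card = (2*n+1)^(d-1) := by
    have hcongr : ∀ j ∈ Finset.univ.erase i,
        (if j = i then ({-(n:ℤ), (n:ℤ)} : Finset ℤ) else Finset.Icc (-(n:ℤ)) n).card = 2*n+1 := by
      intro j hj
      rw [if_neg (Finset.mem_erase.mp hj).1, Int.card_Icc]
      omega
    rw [Finset.prod_congr rfl hcongr, Finset.prod_const,
      Finset.card_erase_of_mem (Finset.mem_univ i), Finset.card_univ, Fintype.card_fin]
  rw [h2]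
  exact Nat.mul_le_mul_right _ h1

include hd in
lemma shell_subset (s : Finset (Fin d → ℤ)) (n : ℕ) :
    {k ∈ s | kinf k = n} ⊆ Finset.univ.biUnion (fun i => Face d i n) := by
  intro k hk
  obtain ⟨_, hkn⟩ := Finset.mem_filter.mp hk
  have hne : (Finset.univ : Finset (Fin d)).Nonempty := by
    rw [Finset.univ_nonempty_iff]; exact Fin.pos_iff_nonempty.mp hd
  obtain ⟨i, _, hi⟩ := Finset.exists_mem_eq_sup Finset.univ hne fun i => (k i).natAbs
  apply Finset.mem_biUnion.mpr ⟨i, Finset.mem_univ i, ?_⟩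
  rw [Face, Fintype.mem_piFinset]
  intro j
  by_cases hji : j = i
  · subst hji
    rw [if_pos rfl]
    have : (k j).natAbs = n := by rw [← hkn, kinf, ← hi]
    simp only [Finset.mem_insert, Finset.mem_singleton]
    omega
  · rw [if_neg hji, Finset.mem_Icc]
    have : (k j).natAbs ≤ n := hkn ▸ natAbs_le_kinf k j
    omega

include hd in
lemma shell_card (s : Finset (Fin d → ℤ)) (n : ℕ) :
    ({k ∈ s | kinf k = n}).card ≤ d * (2 * (2*n+1)^(d-1)) := by
  calc ({k ∈ s | kinf k = n}).card ≤ (Finset.univ.biUnion (fun i => Face d i n)).card :=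
        Finset.card_le_card (shell_subset hd s n)
    _ ≤ ∑ i : Fin d, (Face d i n).card := Finset.card_biUnion_le
    _ ≤ ∑ _i : Fin d, 2 * (2*n+1)^(d-1) := Finset.sum_le_sum (fun i _ => card_face i n)
    _ = d * (2 * (2*n+1)^(d-1)) := by rw [Finset.sum_const, Finset.card_univ, Fintype.card_fin, smul_eq_mul]

end basic

lemma step_ineq {p a : ℝ} (hp : 1 < p) (ha : 1 ≤ a) :
    (p - 1) * (a + 1) ^ (-p) ≤ a ^ (1 - p) - (a + 1) ^ (1 - p) := by
  have ha0 : 0 < a := lt_of_lt_of_le one_pos ha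
  have ha1 : 0 < a + 1 := by linarith
  have hap : (0:ℝ) < a ^ p := Real.rpow_pos_of_pos ha0 p
  have ha1p : (0:ℝ) < (a+1) ^ p := Real.rpow_pos_of_pos ha1 p
  have hb : 1 + p * (1 / a) ≤ (1 + 1 / a) ^ p := by
    apply one_add_mul_self_le_rpow_one_add _ hp.le
    have : (0:ℝ) ≤ 1 / a := by positivity
    linarith
  have h1a : (1 : ℝ) + 1 / a = (a + 1) / a := by field_simp
  have hb2 : (a + p) / a ≤ (a + 1) ^ p / a ^ p := by
    rw [← Real.div_rpow ha1.le ha0.le p, ← h1a]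
    calc (a + p)/a = 1 + p * (1/a) := by field_simp
    _ ≤ _ := hb
  rw [div_le_div_iff₀ ha0 hap] at hb2
  have hkey : a + p ≤ a ^ (1-p) * (a + 1) ^ p := by
    have h3 : a ^ (1-p) * a ^ p = a := by
      rw [← Real.rpow_add ha0]; norm_num
    have h4 : (0:ℝ) ≤ a ^ (1-p) := (Real.rpow_pos_of_pos ha0 _).le
    have h5 := mul_le_mul_of_nonneg_left hb2 h4
    have h6 : a ^ (1-p) * ((a+p) * a^p) = (a+p) * a := by
      rw [← mul_assoc, mul_comm (a^(1-p)), mul_assoc, h3]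
    rw [h6, ← mul_assoc, mul_comm (a^(1-p)), mul_assoc] at h5
    exact le_of_mul_le_mul_right (by linarith [h5]) ha0
  have hmerge : (a+1) * (a+1)^(-p) = (a+1)^(1-p) := by
    rw [show (1:ℝ)-p = 1 + -p by ring, Real.rpow_add ha1, Real.rpow_one]
  have e1 : a ^ (1-p) - (a+1)^(1-p) = (a^(1-p) * (a+1)^p - (a+1)) * (a+1)^(-p) := by
    rw [sub_mul, mul_assoc, ← Real.rpow_add ha1, hmerge]
    norm_num
  rw [e1]
  apply mul_le_mul_of_nonneg_right _ (Real.rpow_pos_of_pos ha1 _).le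
  linarith

lemma tail_sum {p : ℝ} (hp : 1 < p) (N : ℕ) (s : Finset ℕ) (hs : ∀ n ∈ s, N ≤ n) :
    ∑ n ∈ s, ((n:ℝ)+1) ^ (-p) ≤ (2^p/(p-1)) * ((N:ℝ)+1) ^ (1-p) := by
  set K : ℝ := 2^p/(p-1) with hK
  have hK0 : 0 < K := by
    apply div_pos (Real.rpow_pos_of_pos two_pos p); linarith
  set g : ℕ → ℝ := fun n => ((n:ℝ)+1) ^ (1-p) with hg
  have hg0 : ∀ n, 0 ≤ g n := fun n => (Real.rpow_pos_of_pos (by positivity) _).le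
  have hterm : ∀ n : ℕ, ((n:ℝ)+1) ^ (-p) ≤ K * (g n - g (n+1)) := by
    intro n
    have h1 : (0:ℝ) < (n:ℝ) + 1 := by positivity
    have h1' : (0:ℝ) < (n:ℝ) + 1 + 1 := by positivity
    have hstep := step_ineq hp (by simp : (1:ℝ) ≤ (n:ℝ)+1)
    have h2 : ((n:ℝ)+1) ^ (-p) ≤ 2^p * (((n:ℝ)+1)+1) ^ (-p) := by
      have hle : ((n:ℝ)+1)+1 ≤ 2 * ((n:ℝ)+1) := by push_cast; linarith
      have hA : ((n:ℝ)+1+1)^p ≤ 2^p * ((n:ℝ)+1)^p := by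
        rw [← Real.mul_rpow (by norm_num) h1.le]
        exact Real.rpow_le_rpow (by positivity) hle (by linarith)
      rw [Real.rpow_neg h1.le, Real.rpow_neg h1'.le]
      have h2p : (0:ℝ) < ((n:ℝ)+1+1)^p := Real.rpow_pos_of_pos h1' p
      have hB : (2^p * ((n:ℝ)+1)^p)⁻¹ ≤ (((n:ℝ)+1+1)^p)⁻¹ := by
        apply inv_anti₀ h2p hA
      calc (((n:ℝ)+1)^p)⁻¹ = 2^p * (2^p * ((n:ℝ)+1)^p)⁻¹ := by
            rw [mul_inv]
            rw [← mul_assoc, mul_inv_cancel₀ (ne_of_gt (Real.rpow_pos_of_pos two_pos p)), one_mul]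
        _ ≤ 2^p * (((n:ℝ)+1+1)^p)⁻¹ := by
            exact mul_le_mul_of_nonneg_left hB (Real.rpow_pos_of_pos two_pos p).le
    have h3 : (((n:ℝ)+1)+1) ^ (-p) ≤ (g n - g (n+1)) / (p-1) := by
      rw [le_div_iff₀ (by linarith : (0:ℝ) < p - 1)]
      have : g n - g (n+1) = ((n:ℝ)+1) ^ (1-p) - (((n:ℝ)+1)+1) ^ (1-p) := by
        simp only [hg]; push_cast; ring_nf
      rw [this, mul_comm]
      exact hstep
    calc ((n:ℝ)+1) ^ (-p) ≤ 2^p * ((((n:ℝ)+1)+1) ^ (-p)) := h2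
      _ ≤ 2^p * ((g n - g (n+1)) / (p-1)) :=
          mul_le_mul_of_nonneg_left h3 (Real.rpow_pos_of_pos two_pos p).le
      _ = K * (g n - g (n+1)) := by rw [hK]; ring
  rcases s.eq_empty_or_nonempty with rfl | hne
  · simp; positivity
  · set M := s.max' hne with hM
    have hsub : s ⊆ Finset.Icc N M := by
      intro n hn
      exact Finset.mem_Icc.mpr ⟨hs n hn, Finset.le_max' s n hn⟩
    have h0 : ∀ n ∈ Finset.Icc N M, (0:ℝ) ≤ ((n:ℝ)+1) ^ (-p) := by
      intro n _; positivity
    have hNM : N ≤ M := hs M (s.max'_mem hne)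
    calc ∑ n ∈ s, ((n:ℝ)+1) ^ (-p) ≤ ∑ n ∈ Finset.Icc N M, ((n:ℝ)+1) ^ (-p) :=
          Finset.sum_le_sum_of_subset_of_nonneg hsub (fun n hn _ => by positivity)
      _ ≤ ∑ n ∈ Finset.Icc N M, K * (g n - g (n+1)) :=
          Finset.sum_le_sum (fun n _ => hterm n)
      _ = K * ∑ n ∈ Finset.Icc N M, (g n - g (n+1)) := by rw [Finset.mul_sum]
      _ = K * (g N - g (M+1)) := by
          congr 1
          rw [show Finset.Icc N M = Finset.Ico N (M+1) by rw [Finset.Ico_add_one_right_eq_Icc]]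
          rw [Finset.sum_Ico_eq_sum_range]
          have : ∀ i, g (N + i) - g (N + i + 1) = (fun j => g (N + j)) i - (fun j => g (N + j)) (i+1) := by
            intro i; simp [Nat.add_assoc]
          simp_rw [this]
          rw [Finset.sum_range_sub' (fun j => g (N + j))]
          congr 2
          omega
      _ ≤ K * g N := by
          apply mul_le_mul_of_nonneg_left _ hK0.le
          linarith [hg0 (M+1)]
      _ = K * ((N:ℝ)+1) ^ (1-p) := rfl

lemma main_ub {d : ℕ} (hd : 1 ≤ d) {α : ℝ} (hα : (d:ℝ)/2 < α) :
    ∃ C : ℝ, 0 < C ∧ ∀ (N : ℕ) (s : Finset (Fin d → ℤ)), (∀ k ∈ s, N ≤ kinf k) →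
      ∑ k ∈ s, 1 / lam k ^ α ≤ C * ((N:ℝ)+1) ^ ((d:ℝ) - 2*α) := by
  have hα0 : 0 < α := lt_of_le_of_lt (by positivity) hα
  set p : ℝ := 2*α + 1 - d with hpdef
  have hp : 1 < p := by simp only [hpdef]; linarith
  set C₁ : ℝ := (2*d) * 3^(d-1) * 2^α with hC₁
  have hC₁0 : 0 < C₁ := by
    have : (0:ℝ) < 2^α := Real.rpow_pos_of_pos two_pos α
    have hd' : (0:ℝ) < (d:ℝ) := by exact_mod_cast hd
    positivity
  refine ⟨C₁ * (2^p/(p-1)), mul_pos hC₁0 (div_pos (Real.rpow_pos_of_pos two_pos p) (by linarith)), ?_⟩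
  intro N s hs
  have key : ∀ n : ℕ, ∑ k ∈ {k ∈ s | kinf k = n}, 1 / lam k ^ α ≤ C₁ * ((n:ℝ)+1)^(-p) := by
    intro n
    have hn1 : (0:ℝ) < (n:ℝ)+1 := by positivity
    have hterm : ∀ k ∈ {k ∈ s | kinf k = n}, 1 / lam k ^ α ≤ (1+(n:ℝ)^2)^(-α) := by
      intro k hk
      have hkn : kinf k = n := (Finset.mem_filter.mp hk).2
      have hge : 1 + ((n:ℝ))^2 ≤ lam k := by
        have := lam_ge_kinf hd k
        rw [hkn] at this; exact this
      have h1n : (0:ℝ) < 1 + (n:ℝ)^2 := by positivity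
      rw [Real.rpow_neg h1n.le, one_div]
      apply inv_anti₀ (Real.rpow_pos_of_pos h1n α)
      exact Real.rpow_le_rpow h1n.le hge hα0.le
    -- cardinality bound, as reals
    have hcardR : (({k ∈ s | kinf k = n}).card : ℝ) ≤ (2*d) * 3^(d-1) * ((n:ℝ)+1)^(d-1) := by
      have h1 : (({k ∈ s | kinf k = n}).card : ℝ) ≤ ((d * (2 * (2*n+1)^(d-1)) : ℕ) : ℝ) := by
        exact_mod_cast shell_card hd s n
      have h2 : ((d * (2 * (2*n+1)^(d-1)) : ℕ) : ℝ) = (2*d) * ((2*(n:ℝ)+1))^(d-1) := by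
        push_cast; ring
      have h3 : (2*(d:ℝ)) * ((2*(n:ℝ)+1))^(d-1) ≤ (2*d) * (3*((n:ℝ)+1))^(d-1) := by
        have hd' : (0:ℝ) ≤ 2*(d:ℝ) := by positivity
        apply mul_le_mul_of_nonneg_left _ hd'
        apply pow_le_pow_left₀ (by positivity) (by linarith [Nat.cast_nonneg (α := ℝ) n])
      have h4 : (2*(d:ℝ)) * (3*((n:ℝ)+1))^(d-1) = (2*d) * 3^(d-1) * ((n:ℝ)+1)^(d-1) := by
        rw [mul_pow]; ring
      linarith [h1, h2 ▸ h1, h3]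
    -- pointwise bound as rpow product
    have hpt : (1+(n:ℝ)^2)^(-α) ≤ 2^α * ((n:ℝ)+1)^(-(2*α)) := by
      have h1n : (0:ℝ) < 1 + (n:ℝ)^2 := by positivity
      have hsq : ((n:ℝ)+1)^((2:ℕ):ℝ) ≤ 2 * (1 + (n:ℝ)^2) := by
        rw [Real.rpow_natCast]
        nlinarith [sq_nonneg ((n:ℝ)-1)]
      have e1 : ((n:ℝ)+1)^(-(2*α)) = (((n:ℝ)+1)^((2:ℕ):ℝ) : ℝ)^(-α) := by
        rw [← Real.rpow_mul hn1.le]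
        norm_num
      rw [e1]
      have h2 : (0:ℝ) < ((n:ℝ)+1)^((2:ℕ):ℝ) := Real.rpow_pos_of_pos hn1 _
      rw [Real.rpow_neg h1n.le, Real.rpow_neg h2.le]
      have h3 : (((n:ℝ)+1)^((2:ℕ):ℝ) / 2) ^ α ≤ (1 + (n:ℝ)^2) ^ α := by
        apply Real.rpow_le_rpow (by positivity) _ hα0.le
        rw [div_le_iff₀ two_pos, mul_comm]
        exact hsq
      have h4 : (((n:ℝ)+1)^((2:ℕ):ℝ) / 2) ^ α = (((n:ℝ)+1)^((2:ℕ):ℝ))^α / 2^α :=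
        Real.div_rpow h2.le (by norm_num) α
      calc ((1 + (n:ℝ)^2) ^ α)⁻¹ ≤ ((((n:ℝ)+1)^((2:ℕ):ℝ) / 2) ^ α)⁻¹ :=
            inv_anti₀ (by rw [h4]; positivity) h3
        _ = (2:ℝ)^α * ((((n:ℝ)+1)^((2:ℕ):ℝ))^α)⁻¹ := by
            rw [h4, inv_div, div_eq_mul_inv]
    have hfin : ((2*(d:ℝ)) * 3^(d-1) * ((n:ℝ)+1)^(d-1)) * ((2:ℝ)^α * ((n:ℝ)+1)^(-(2*α)))
        = C₁ * ((n:ℝ)+1)^(-p) := by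
      rw [hC₁]
      have e2 : (((n:ℝ)+1):ℝ)^(d-1) = ((n:ℝ)+1)^(((d-1:ℕ)):ℝ) := (Real.rpow_natCast _ _).symm
      have e3 : (((d-1:ℕ)):ℝ) = (d:ℝ) - 1 := by
        push_cast [Nat.cast_sub hd]; ring
      rw [e2, e3]
      rw [show ((2*(d:ℝ)) * 3^(d-1) * ((n:ℝ)+1)^((d:ℝ)-1)) * ((2:ℝ)^α * ((n:ℝ)+1)^(-(2*α)))
          = ((2*(d:ℝ)) * 3^(d-1) * (2:ℝ)^α) * (((n:ℝ)+1)^((d:ℝ)-1) * ((n:ℝ)+1)^(-(2*α))) by ring]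
      rw [← Real.rpow_add hn1]
      congr 2
      simp only [hpdef]; ring
    calc ∑ k ∈ {k ∈ s | kinf k = n}, 1 / lam k ^ α
        ≤ ({k ∈ s | kinf k = n}).card * (1+(n:ℝ)^2)^(-α) := by
          have := Finset.sum_le_card_nsmul _ _ _ hterm
          rwa [nsmul_eq_mul] at this
      _ ≤ ((2*(d:ℝ)) * 3^(d-1) * ((n:ℝ)+1)^(d-1)) * ((2:ℝ)^α * ((n:ℝ)+1)^(-(2*α))) := by
          apply mul_le_mul hcardR hpt (by positivity) (by positivity)
      _ = C₁ * ((n:ℝ)+1)^(-p) := hfin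
  have hsplit : ∑ k ∈ s, 1 / lam k ^ α
      = ∑ n ∈ s.image kinf, ∑ k ∈ {k ∈ s | kinf k = n}, 1 / lam k ^ α :=
    (Finset.sum_fiberwise_of_maps_to (fun k hk => Finset.mem_image_of_mem kinf hk) _).symm
  rw [hsplit]
  calc ∑ n ∈ s.image kinf, ∑ k ∈ {k ∈ s | kinf k = n}, 1 / lam k ^ α
      ≤ ∑ n ∈ s.image kinf, C₁ * ((n:ℝ)+1)^(-p) := Finset.sum_le_sum (fun n _ => key n)
    _ = C₁ * ∑ n ∈ s.image kinf, ((n:ℝ)+1)^(-p) := by rw [Finset.mul_sum]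
    _ ≤ C₁ * ((2^p/(p-1)) * ((N:ℝ)+1)^(1-p)) := by
        apply mul_le_mul_of_nonneg_left _ hC₁0.le
        apply tail_sum hp N
        intro n hn
        obtain ⟨k, hk, rfl⟩ := Finset.mem_image.mp hn
        exact hs k hk
    _ = (C₁ * (2^p/(p-1))) * ((N:ℝ)+1)^((d:ℝ)-2*α) := by
        rw [show (1:ℝ)-p = (d:ℝ)-2*α by simp only [hpdef]; ring]
        ring

lemma tsum_tail {d : ℕ} (hd : 1 ≤ d) {α : ℝ} (hα : (d:ℝ)/2 < α) :
    ∃ C : ℝ, 0 < C ∧ ∀ N : ℕ,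
      (∑' k : Fin d → ℤ, if N ≤ kinf k then ENNReal.ofReal (1 / lam k ^ α) else 0)
        ≤ ENNReal.ofReal (C * ((N:ℝ)+1) ^ ((d:ℝ) - 2*α)) := by
  obtain ⟨C, hC0, hC⟩ := main_ub hd hα
  refine ⟨C, hC0, fun N => ?_⟩
  rw [ENNReal.tsum_eq_iSup_sum]
  apply iSup_le
  intro s
  have e1 : ∑ k ∈ s, (if N ≤ kinf k then ENNReal.ofReal (1 / lam k ^ α) else 0)
      = ∑ k ∈ {k ∈ s | N ≤ kinf k}, ENNReal.ofReal (1 / lam k ^ α) :=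
    (Finset.sum_filter _ _).symm
  rw [e1, ← ENNReal.ofReal_sum_of_nonneg
    (fun k _ => div_nonneg zero_le_one (Real.rpow_nonneg (lam_pos k).le α))]
  apply ENNReal.ofReal_le_ofReal
  exact hC N _ (fun k hk => (Finset.mem_filter.mp hk).2)

lemma backward_bound {d : ℕ} (hd : 1 ≤ d) {α : ℝ} (hα : (d:ℝ)/2 < α) {β : ℝ}
    (hβ : β ≤ α - (d:ℝ)/2) {c : ℝ} (hc : 0 < c) :
    ∃ D : ℝ, ∀ v : Fin d → ℤ,
      ENNReal.ofReal ((lam v) ^ β) *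
        (∑' k : Fin d → ℤ, if c * znorm v < znorm k then ENNReal.ofReal (1 / (lam k) ^ α) else 0)
        ≤ ENNReal.ofReal D := by
  obtain ⟨C, hC0, hC⟩ := tsum_tail hd hα
  have hsd : (0:ℝ) < Real.sqrt d := Real.sqrt_pos.mpr (by exact_mod_cast hd)
  set m₂ : ℝ := min (c / Real.sqrt d) 1 with hm₂
  have hm₂0 : 0 < m₂ := lt_min (div_pos hc hsd) one_pos
  set e : ℝ := (d:ℝ) - 2*α with he
  have he0 : e ≤ 0 := by simp only [he]; linarith
  refine ⟨C * m₂ ^ e, fun v => ?_⟩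
  set Nv : ℕ := ⌈c * znorm v / Real.sqrt d⌉₊ with hNv
  have hlam1 : 1 ≤ lam v := one_le_lam v
  have hlam0 : 0 < lam v := lam_pos v
  have h1 : (∑' k : Fin d → ℤ, if c * znorm v < znorm k then ENNReal.ofReal (1 / (lam k) ^ α) else 0)
      ≤ ∑' k : Fin d → ℤ, if Nv ≤ kinf k then ENNReal.ofReal (1 / lam k ^ α) else 0 := by
    apply ENNReal.tsum_le_tsum
    intro k
    by_cases h : c * znorm v < znorm k
    · rw [if_pos h, if_pos]
      apply Nat.ceil_le.mpr
      rw [div_le_iff₀ hsd]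
      calc c * znorm v ≤ znorm k := h.le
        _ ≤ Real.sqrt d * kinf k := znorm_le_sqrtd_kinf k
        _ = (kinf k : ℝ) * Real.sqrt d := by ring
    · rw [if_neg h]; exact zero_le
  have h3 : m₂ * Real.sqrt (lam v) ≤ (Nv:ℝ) + 1 := by
    have ha : c * znorm v / Real.sqrt d ≤ (Nv:ℝ) := Nat.le_ceil _
    have hz0 : 0 ≤ znorm v := znorm_nonneg v
    have hs1 : Real.sqrt (lam v) ≤ znorm v + 1 := by
      have : lam v ≤ (znorm v + 1)^2 := by
        have := znorm_sq (k := v)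
        rw [lam, ← this]; nlinarith
      calc Real.sqrt (lam v) ≤ Real.sqrt ((znorm v + 1)^2) := Real.sqrt_le_sqrt this
        _ = znorm v + 1 := Real.sqrt_sq (by linarith)
    have hm1 : m₂ * znorm v ≤ c / Real.sqrt d * znorm v :=
      mul_le_mul_of_nonneg_right (min_le_left _ _) hz0
    have hm2 : m₂ ≤ 1 := min_le_right _ _
    have heq : c / Real.sqrt d * znorm v = c * znorm v / Real.sqrt d := by ring
    calc m₂ * Real.sqrt (lam v) ≤ m₂ * (znorm v + 1) :=
          mul_le_mul_of_nonneg_left hs1 hm₂0.le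
      _ = m₂ * znorm v + m₂ := by ring
      _ ≤ c * znorm v / Real.sqrt d + 1 := by rw [← heq]; linarith
      _ ≤ (Nv:ℝ) + 1 := by linarith
  have hms : 0 < m₂ * Real.sqrt (lam v) := by positivity
  have h4 : ((Nv:ℝ)+1)^e ≤ (m₂ * Real.sqrt (lam v))^e :=
    Real.rpow_le_rpow_of_nonpos hms h3 he0
  have h5 : (m₂ * Real.sqrt (lam v))^e = m₂^e * (lam v)^(e/2) := by
    rw [Real.mul_rpow hm₂0.le (Real.sqrt_nonneg _)]
    congr 1
    rw [Real.sqrt_eq_rpow, ← Real.rpow_mul hlam0.le]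
    ring_nf
  calc ENNReal.ofReal ((lam v) ^ β) *
        (∑' k : Fin d → ℤ, if c * znorm v < znorm k then ENNReal.ofReal (1 / (lam k) ^ α) else 0)
      ≤ ENNReal.ofReal ((lam v) ^ β) * ENNReal.ofReal (C * ((Nv:ℝ)+1)^e) :=
        mul_le_mul_right (h1.trans (hC Nv)) _
    _ = ENNReal.ofReal ((lam v) ^ β * (C * ((Nv:ℝ)+1)^e)) :=
        (ENNReal.ofReal_mul (by positivity)).symm
    _ ≤ ENNReal.ofReal (C * m₂ ^ e) := by
        apply ENNReal.ofReal_le_ofReal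
        have r1 : (lam v)^β ≤ (lam v)^(-(e/2)) := by
          apply Real.rpow_le_rpow_of_exponent_le hlam1
          simp only [he]; linarith
        have r2 : ((Nv:ℝ)+1)^e ≤ m₂^e * (lam v)^(e/2) := h4.trans_eq h5
        calc (lam v)^β * (C * ((Nv:ℝ)+1)^e)
            ≤ (lam v)^(-(e/2)) * (C * (m₂^e * (lam v)^(e/2))) := by
              apply mul_le_mul r1 (mul_le_mul_of_nonneg_left r2 hC0.le) (by positivity) (by positivity)
          _ = C * m₂^e * ((lam v)^(-(e/2)) * (lam v)^(e/2)) := by ring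
          _ = C * m₂^e := by rw [← Real.rpow_add hlam0]; norm_num

lemma forward_term_lb {d : ℕ} (hd : 1 ≤ d) {α : ℝ} (hα : (d:ℝ)/2 < α) (β : ℝ)
    {c : ℝ} (hc : 0 < c) :
    ∃ c₅ : ℝ, 0 < c₅ ∧ ∀ n : ℕ, 1 ≤ n → ∃ v : Fin d → ℤ,
      ENNReal.ofReal (c₅ * (n:ℝ) ^ (2*β + ((d:ℝ) - 2*α))) ≤
      ENNReal.ofReal ((lam v) ^ β) *
        (∑' k : Fin d → ℤ, if c * znorm v < znorm k then ENNReal.ofReal (1 / (lam k) ^ α) else 0) := by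
  have hd0 : (0:ℝ) < d := by exact_mod_cast hd
  have hsd : (0:ℝ) < Real.sqrt d := Real.sqrt_pos.mpr hd0
  have hα0 : 0 < α := lt_of_le_of_lt (by positivity) hα
  set e : ℝ := (d:ℝ) - 2*α with he
  have he0 : e ≤ 0 := by simp only [he]; linarith
  set K₁ : ℝ := c * Real.sqrt d + 2 with hK₁
  have hK₁0 : 0 < K₁ := by positivity
  set c₄ : ℝ := min 1 ((1+(d:ℝ))^β) with hc₄
  have hc₄0 : 0 < c₄ := lt_min one_pos (Real.rpow_pos_of_pos (by linarith) β)
  set c₅ : ℝ := c₄ * (5*(d:ℝ))^(-α) * K₁^e with hc₅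
  have hc₅0 : 0 < c₅ := by
    have h1 : (0:ℝ) < (5*(d:ℝ))^(-α) := Real.rpow_pos_of_pos (by linarith) _
    have h2 : (0:ℝ) < K₁^e := Real.rpow_pos_of_pos hK₁0 _
    positivity
  refine ⟨c₅, hc₅0, fun n hn => ?_⟩
  have hn1 : (1:ℝ) ≤ (n:ℝ) := by exact_mod_cast hn
  have hn0 : (0:ℝ) < (n:ℝ) := by linarith
  set v : Fin d → ℤ := fun _ => (n:ℤ) with hv
  set M : ℕ := ⌈c * Real.sqrt d * n⌉₊ + 1 with hM
  have hM1 : 1 ≤ M := Nat.le_add_left 1 _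
  have hM1R : (1:ℝ) ≤ (M:ℝ) := by exact_mod_cast hM1
  have hM0R : (0:ℝ) < (M:ℝ) := by linarith
  have hMgt : c * Real.sqrt d * n < (M:ℝ) := by
    have := Nat.le_ceil (c * Real.sqrt d * n)
    have h2 : ((⌈c * Real.sqrt d * n⌉₊ : ℕ):ℝ) + 1 = (M:ℝ) := by
      rw [hM]; push_cast; ring
    linarith
  have hMle : (M:ℝ) ≤ K₁ * n := by
    have h1 : (⌈c * Real.sqrt d * n⌉₊ : ℝ) ≤ c * Real.sqrt d * n + 1 :=
      (Nat.ceil_lt_add_one (by positivity)).le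
    have h2 : (M:ℝ) = (⌈c * Real.sqrt d * n⌉₊ : ℝ) + 1 := by rw [hM]; push_cast; ring
    have : c * Real.sqrt d * n + 2 ≤ c * Real.sqrt d * n + 2 * n := by nlinarith
    rw [h2, hK₁]; nlinarith [mul_nonneg (mul_nonneg hc.le hsd.le) hn0.le]
  -- znorm v and lam v
  have hsum_v : ∑ i, (((v i):ℝ))^2 = (d:ℝ) * (n:ℝ)^2 := by
    simp [hv, Finset.sum_const, Finset.card_univ]
  have hznorm_v : znorm v = Real.sqrt d * n := by
    rw [znorm, hsum_v, show (d:ℝ) * (n:ℝ)^2 = (Real.sqrt d * n)^2 by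
      rw [mul_pow, Real.sq_sqrt hd0.le], Real.sqrt_sq (by positivity)]
  have hlam_v : lam v = 1 + (d:ℝ) * (n:ℝ)^2 := by rw [lam, hsum_v]
  set F : Finset (Fin d → ℤ) := Fintype.piFinset (fun _ : Fin d => Finset.Icc (M:ℤ) (2*M:ℤ)) with hF
  have hcardF : F.card = (M+1)^d := by
    rw [hF, Fintype.card_piFinset]
    have : ∀ i : Fin d, (Finset.Icc ((M:ℤ)) (2*M:ℤ)).card = M+1 := by
      intro i; rw [Int.card_Icc]; omega
    rw [Finset.prod_congr rfl (fun i _ => this i), Finset.prod_const, Finset.card_univ,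
      Fintype.card_fin]
  have i0 : Fin d := ⟨0, hd⟩
  -- for k ∈ F the condition holds and lam k ≤ 5dM²
  have hcond : ∀ k ∈ F, c * znorm v < znorm k := by
    intro k hk
    rw [Fintype.mem_piFinset] at hk
    obtain ⟨h1, h2⟩ := Finset.mem_Icc.mp (hk i0)
    have : (M:ℝ) ≤ |(k i0 : ℝ)| := by
      rw [abs_of_nonneg (by exact_mod_cast le_trans (by positivity) h1)]
      exact_mod_cast h1
    calc c * znorm v = c * Real.sqrt d * n := by rw [hznorm_v]; ring
      _ < (M:ℝ) := hMgt
      _ ≤ |(k i0 : ℝ)| := this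
      _ ≤ znorm k := abs_coord_le_znorm k i0
  have hlamk : ∀ k ∈ F, lam k ≤ 5*(d:ℝ)*(M:ℝ)^2 := by
    intro k hk
    rw [Fintype.mem_piFinset] at hk
    have hterm : ∀ i, ((k i : ℝ))^2 ≤ (2*(M:ℝ))^2 := by
      intro i
      obtain ⟨h1, h2⟩ := Finset.mem_Icc.mp (hk i)
      have hpos : (0:ℝ) ≤ (k i : ℝ) := by exact_mod_cast le_trans (by positivity) h1
      have h2' : (k i : ℝ) ≤ 2*(M:ℝ) := by exact_mod_cast h2
      nlinarith
    have hsum := Finset.sum_le_sum (fun i (_ : i ∈ Finset.univ) => hterm i)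
    rw [Finset.sum_const, Finset.card_univ, Fintype.card_fin, nsmul_eq_mul] at hsum
    rw [lam]
    have hM2 : (1:ℝ) ≤ (M:ℝ)^2 := by
      rw [← one_pow 2]; exact pow_le_pow_left₀ zero_le_one hM1R 2
    have hd1R : (1:ℝ) ≤ (d:ℝ) := by exact_mod_cast hd
    have hdm : (1:ℝ) ≤ (d:ℝ)*(M:ℝ)^2 := by
      have := mul_le_mul hd1R hM2 zero_le_one (le_trans zero_le_one hd1R)
      simpa using this
    have hexp : (d:ℝ)*(2*(M:ℝ))^2 = 4*((d:ℝ)*(M:ℝ)^2) := by ring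
    linarith [hsum, hdm, hexp]
  -- lower bound on tsum
  have hsum_lb : ENNReal.ofReal (((M:ℝ))^d * (1 / (5*(d:ℝ)*(M:ℝ)^2)^α)) ≤
      ∑' k : Fin d → ℤ, if c * znorm v < znorm k then ENNReal.ofReal (1 / (lam k) ^ α) else 0 := by
    have h5d : (0:ℝ) < 5*(d:ℝ)*(M:ℝ)^2 := by positivity
    have step1 : ∀ k ∈ F, ENNReal.ofReal (1 / (5*(d:ℝ)*(M:ℝ)^2)^α) ≤
        (if c * znorm v < znorm k then ENNReal.ofReal (1 / (lam k) ^ α) else 0) := by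
      intro k hk
      rw [if_pos (hcond k hk)]
      apply ENNReal.ofReal_le_ofReal
      apply one_div_le_one_div_of_le (Real.rpow_pos_of_pos (lam_pos k) α)
      exact Real.rpow_le_rpow (lam_pos k).le (hlamk k hk) hα0.le
    calc ENNReal.ofReal (((M:ℝ))^d * (1 / (5*(d:ℝ)*(M:ℝ)^2)^α))
        ≤ ENNReal.ofReal (((M+1:ℕ))^d * (1 / (5*(d:ℝ)*(M:ℝ)^2)^α)) := by
          apply ENNReal.ofReal_le_ofReal
          apply mul_le_mul_of_nonneg_right _ (by positivity)
          have : ((M:ℝ))^d ≤ ((M:ℝ)+1)^d := by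
            apply pow_le_pow_left₀ (by positivity) (by linarith)
          calc ((M:ℝ))^d ≤ ((M:ℝ)+1)^d := this
            _ = (((M+1:ℕ)):ℝ)^d := by push_cast; ring
      _ = (F.card : ℝ≥0∞) * ENNReal.ofReal (1 / (5*(d:ℝ)*(M:ℝ)^2)^α) := by
          rw [← ENNReal.ofReal_natCast, ← ENNReal.ofReal_mul (by positivity)]
          congr 1
          rw [hcardF]; push_cast; ring
      _ = ∑ k ∈ F, ENNReal.ofReal (1 / (5*(d:ℝ)*(M:ℝ)^2)^α) := by
          rw [Finset.sum_const, nsmul_eq_mul]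
      _ ≤ ∑ k ∈ F, (if c * znorm v < znorm k then ENNReal.ofReal (1 / (lam k) ^ α) else 0) :=
          Finset.sum_le_sum step1
      _ ≤ _ := ENNReal.sum_le_tsum F
  refine ⟨v, ?_⟩
  -- combine
  have hmain : c₅ * (n:ℝ) ^ (2*β + e) ≤ (lam v)^β * ((((M:ℝ))^d) * (1 / (5*(d:ℝ)*(M:ℝ)^2)^α)) := by
    -- rewrite the second factor as (5d)^(-α) * M^e
    have h5 : (0:ℝ) < 5*(d:ℝ) := by linarith
    have hrw : (((M:ℝ))^d) * (1 / (5*(d:ℝ)*(M:ℝ)^2)^α) = (5*(d:ℝ))^(-α) * (M:ℝ)^e := by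
      have e0 : (5*(d:ℝ)*(M:ℝ)^2)^α = (5*(d:ℝ))^α * ((M:ℝ))^(2*α) := by
        rw [show 5*(d:ℝ)*(M:ℝ)^2 = (5*(d:ℝ)) * (M:ℝ)^2 by ring,
          Real.mul_rpow h5.le (by positivity), ← Real.rpow_natCast (M:ℝ) 2,
          ← Real.rpow_mul hM0R.le]
        norm_num
      have e1 : ((M:ℝ))^d = (M:ℝ)^((d:ℝ)) := (Real.rpow_natCast _ _).symm
      have e2 : (M:ℝ)^e = (M:ℝ)^((d:ℝ)) * ((M:ℝ)^(2*α))⁻¹ := by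
        rw [he, show (d:ℝ)-2*α = (d:ℝ) + (-(2*α)) by ring, Real.rpow_add hM0R,
          Real.rpow_neg hM0R.le]
      rw [e0, e1, e2, Real.rpow_neg h5.le, one_div, mul_inv]
      ring
    rw [hrw]
    have hMe : K₁^e * (n:ℝ)^e ≤ (M:ℝ)^e := by
      have h1 : (M:ℝ)^e ≥ (K₁*n)^e := Real.rpow_le_rpow_of_nonpos hM0R hMle he0
      rwa [Real.mul_rpow hK₁0.le hn0.le] at h1
    have hlamβ : c₄ * (n:ℝ)^(2*β) ≤ (lam v)^β := by
      rw [hlam_v]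
      rcases le_or_gt 0 β with hb | hb
      · have h1 : ((n:ℝ)^2 : ℝ)^β ≤ (1 + (d:ℝ)*(n:ℝ)^2)^β := by
          have hdd : (1:ℝ) ≤ (d:ℝ) := by exact_mod_cast hd
          have hdn : (1:ℝ) * (n:ℝ)^2 ≤ (d:ℝ) * (n:ℝ)^2 := mul_le_mul_of_nonneg_right hdd (sq_nonneg _)
          apply Real.rpow_le_rpow (by positivity) (by nlinarith [hdn]) hb
        have h2 : ((n:ℝ)^2 : ℝ)^β = (n:ℝ)^(2*β) := by
          rw [← Real.rpow_natCast (n:ℝ) 2, ← Real.rpow_mul hn0.le]; norm_num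
        calc c₄ * (n:ℝ)^(2*β) ≤ 1 * (n:ℝ)^(2*β) := by
              apply mul_le_mul_of_nonneg_right (min_le_left _ _) (by positivity)
          _ = (n:ℝ)^(2*β) := one_mul _
          _ = ((n:ℝ)^2 : ℝ)^β := h2.symm
          _ ≤ _ := h1
      · have h1 : (1 + (d:ℝ)*(n:ℝ)^2)^β ≥ ((1+(d:ℝ))*(n:ℝ)^2)^β := by
          apply Real.rpow_le_rpow_of_nonpos (by positivity) (by nlinarith [hn1]) hb.le
        have h2 : ((1+(d:ℝ))*(n:ℝ)^2)^β = (1+(d:ℝ))^β * (n:ℝ)^(2*β) := by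
          rw [Real.mul_rpow (by positivity) (by positivity)]
          congr 1
          rw [← Real.rpow_natCast (n:ℝ) 2, ← Real.rpow_mul hn0.le]; norm_num
        calc c₄ * (n:ℝ)^(2*β) ≤ (1+(d:ℝ))^β * (n:ℝ)^(2*β) := by
              apply mul_le_mul_of_nonneg_right (min_le_right _ _) (by positivity)
          _ = ((1+(d:ℝ))*(n:ℝ)^2)^β := h2.symm
          _ ≤ _ := h1
    have hne : (n:ℝ)^(2*β+e) = (n:ℝ)^(2*β) * (n:ℝ)^e := Real.rpow_add hn0 _ _
    have h5dα : (0:ℝ) < (5*(d:ℝ))^(-α) := Real.rpow_pos_of_pos (by linarith) _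
    calc c₅ * (n:ℝ)^(2*β+e) = (c₄ * (n:ℝ)^(2*β)) * ((5*(d:ℝ))^(-α) * (K₁^e * (n:ℝ)^e)) := by
          rw [hc₅, hne]; ring
      _ ≤ (lam v)^β * ((5*(d:ℝ))^(-α) * (M:ℝ)^e) := by
          apply mul_le_mul hlamβ _ _ (Real.rpow_pos_of_pos (lam_pos v) β).le
          · exact mul_le_mul_of_nonneg_left hMe h5dα.le
          · have h2 : (0:ℝ) < K₁^e := Real.rpow_pos_of_pos hK₁0 _
            have h3 : (0:ℝ) < (n:ℝ)^e := Real.rpow_pos_of_pos hn0 _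
            positivity
  calc ENNReal.ofReal (c₅ * (n:ℝ) ^ (2*β + e))
      ≤ ENNReal.ofReal ((lam v)^β * ((((M:ℝ))^d) * (1 / (5*(d:ℝ)*(M:ℝ)^2)^α))) :=
        ENNReal.ofReal_le_ofReal hmain
    _ = ENNReal.ofReal ((lam v)^β) * ENNReal.ofReal ((((M:ℝ))^d) * (1 / (5*(d:ℝ)*(M:ℝ)^2)^α)) :=
        ENNReal.ofReal_mul (Real.rpow_pos_of_pos (lam_pos v) β).le
    _ ≤ _ := mul_le_mul_right hsum_lb _

/-- Growth rate of infinite sums: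
`sup_{v ∈ ℤ^d} [ (λ_v)^β · Σ_{k ∈ ℤ^d, ‖k‖ > c‖v‖} 1/(λ_k)^α ] < ∞` iff `β ≤ α − d/2`,
for `α ∈ (d/2, ∞)`, `β ∈ ℝ`, `c ∈ (0,∞)`. -/
theorem growth_rate_infinite_sums (d : ℕ) (hd : 1 ≤ d) (α : ℝ)
    (hα : (d : ℝ) / 2 < α) (β : ℝ) (c : ℝ) (hc : 0 < c) :
    (⨆ v : Fin d → ℤ, ENNReal.ofReal ((lam v) ^ β) *
        ∑' k : Fin d → ℤ,
          (if c * znorm v < znorm k then ENNReal.ofReal (1 / (lam k) ^ α) else 0)) < ⊤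
      ↔ β ≤ α - (d : ℝ) / 2 := by
  constructor
  · intro h
    by_contra hβ
    push_neg at hβ
    obtain ⟨c₅, hc₅0, hlb⟩ := forward_term_lb hd hα β hc
    set q : ℝ := 2*β + ((d:ℝ) - 2*α) with hq
    have hq0 : 0 < q := by simp only [hq]; linarith
    have htop : (⨆ v : Fin d → ℤ, ENNReal.ofReal ((lam v) ^ β) *
        ∑' k : Fin d → ℤ,
          (if c * znorm v < znorm k then ENNReal.ofReal (1 / (lam k) ^ α) else 0)) = ⊤ := by
      apply ENNReal.eq_top_of_forall_nnreal_le
      intro r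
      set x : ℝ := ((r:ℝ)/c₅)^(1/q) with hx
      set n : ℕ := ⌈x⌉₊ + 1 with hn
      have hn1 : 1 ≤ n := Nat.le_add_left 1 _
      have hxn : x ≤ (n:ℝ) := by
        have h1 := Nat.le_ceil x
        have h2 : (n:ℝ) = (⌈x⌉₊:ℝ) + 1 := by rw [hn]; push_cast; ring
        linarith
      have hr : (r:ℝ) ≤ c₅ * (n:ℝ)^q := by
        have hx0 : 0 ≤ x := Real.rpow_nonneg (by positivity) _
        have h1 : x^q ≤ (n:ℝ)^q := Real.rpow_le_rpow hx0 hxn hq0.le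
        have h2 : x^q = (r:ℝ)/c₅ := by
          rw [hx, ← Real.rpow_mul (by positivity), one_div, inv_mul_cancel₀ hq0.ne', Real.rpow_one]
        rw [h2, div_le_iff₀ hc₅0] at h1
        linarith
      obtain ⟨v, hv⟩ := hlb n hn1
      calc (r:ℝ≥0∞) = ENNReal.ofReal (r:ℝ) := ENNReal.ofReal_coe_nnreal.symm
        _ ≤ ENNReal.ofReal (c₅*(n:ℝ)^q) := ENNReal.ofReal_le_ofReal hr
        _ ≤ ENNReal.ofReal ((lam v) ^ β) *
            ∑' k : Fin d → ℤ,
              (if c * znorm v < znorm k then ENNReal.ofReal (1 / (lam k) ^ α) else 0) := hv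
        _ ≤ _ := le_iSup (fun v : Fin d → ℤ => ENNReal.ofReal ((lam v) ^ β) *
            ∑' k : Fin d → ℤ,
              (if c * znorm v < znorm k then ENNReal.ofReal (1 / (lam k) ^ α) else 0)) v
    rw [htop] at h
    exact lt_irrefl ⊤ h
  · intro hβ
    obtain ⟨D, hD⟩ := backward_bound hd hα hβ hc
    exact lt_of_le_of_lt (iSup_le hD) ENNReal.ofReal_lt_top
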